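/- The generalized reduction map Λ^(n) is a positive map: if ρ is a positive semidefinite operator on H_1 ⊗ ⋯ ⊗ H_n, then Λ^(n)(ρ) = Σ_{B ⊆ {1,…,n}} (−1)^{|B|} ρ_B is positive semidefinite. -/

import Mathlib

open ComplexOrder

/-- `ρ_B`: the partial trace of `ρ` over the systems outside `B`, padded with identity
operators on those systems (so `ρ_∅ = Tr(ρ)·I` and `ρ_{1,…,n} = ρ`). -/
noncomputable def subsystemPad {n : ℕ} {d : Fin n → ℕ}
    (ρ : Matrix (∀ i, Fin (d i)) (∀ i, Fin (d i)) ℂ) (B : Finset (Fin n)) :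
    Matrix (∀ i, Fin (d i)) (∀ i, Fin (d i)) ℂ :=
  Matrix.of fun x y =>
    if ∀ i ∉ B, x i = y i then
      ∑ w : ∀ i, Fin (d i),
        if ∀ i ∈ B, w i = x i then ρ w (fun i => if i ∈ B then y i else w i) else 0
    else 0

/-- The generalised reduction map `Λ⁽ⁿ⁾(ρ) = Σ_{B ⊆ {1,…,n}} (−1)^{|B|} ρ_B`. -/
noncomputable def genRed {n : ℕ} {d : Fin n → ℕ}
    (ρ : Matrix (∀ i, Fin (d i)) (∀ i, Fin (d i)) ℂ) :
    Matrix (∀ i, Fin (d i)) (∀ i, Fin (d i)) ℂ :=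
  ∑ B : Finset (Fin n), ((-1 : ℂ) ^ B.card) • subsystemPad ρ B

/-! ### Auxiliary material

We show that `2^n • Λ⁽ⁿ⁾(ρ) = Σ_α A_α ρᵀ A_αᴴ` where the Kraus operators `A_α` are tensor
products of single-site antisymmetric operators `e_b e_aᵀ − e_a e_bᵀ`.  This exhibits `Λ⁽ⁿ⁾`
as the composition of a completely positive map with the (positivity-preserving) transpose,
whence it is a positive map. -/

/-- Single-site Kraus operator `e_b e_aᵀ − e_a e_bᵀ` for `p = (a, b)`. -/
noncomputable def siteK {m : ℕ} (p : Fin m × Fin m) : Matrix (Fin m) (Fin m) ℂ :=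
  Matrix.of fun x s =>
    (if x = p.2 then (1:ℂ) else 0) * (if s = p.1 then 1 else 0)
      - (if x = p.1 then 1 else 0) * (if s = p.2 then 1 else 0)

lemma siteK_star {m : ℕ} (p : Fin m × Fin m) (x s : Fin m) :
    star (siteK p x s) = siteK p x s := by
  simp only [siteK, Matrix.of_apply, star_sub, star_mul', apply_ite (star : ℂ → ℂ),
    star_one, star_zero]

lemma delta_sum {m : ℕ} (u w : Fin m) :
    (∑ b : Fin m, (if u = b then (1:ℂ) else 0) * (if w = b then 1 else 0))
      = if u = w then 1 else 0 := by
  simp only [boole_mul, Finset.sum_ite_eq, Finset.mem_univ, if_true]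
  simp [eq_comm]

lemma site_sum {m : ℕ} (x s y t : Fin m) :
    ∑ p : Fin m × Fin m, siteK p x s * siteK p y t
      = 2 * ((if x = y then (1:ℂ) else 0) * (if s = t then 1 else 0)
        - (if x = t then 1 else 0) * (if s = y then 1 else 0)) := by
  have hfac : ∀ f g : Fin m → ℂ, (∑ a, ∑ b, f b * g a) = (∑ b, f b) * (∑ a, g a) := by
    intro f g
    rw [Finset.sum_comm, ← Finset.sum_mul_sum]
  have hfac' : ∀ f g : Fin m → ℂ, (∑ a, ∑ b, f a * g b) = (∑ a, f a) * (∑ b, g b) := by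
    intro f g
    rw [← Finset.sum_mul_sum]
  have expand : ∀ a b : Fin m,
      siteK (a, b) x s * siteK (a, b) y t
      = ((((if x = b then (1:ℂ) else 0) * (if y = b then 1 else 0))
          * ((if s = a then 1 else 0) * (if t = a then 1 else 0)))
        - (((if x = b then (1:ℂ) else 0) * (if t = b then 1 else 0))
          * ((if s = a then 1 else 0) * (if y = a then 1 else 0))))
        + (((((if x = a then (1:ℂ) else 0) * (if y = a then 1 else 0))
          * ((if s = b then 1 else 0) * (if t = b then 1 else 0))))
        - ((((if x = a then (1:ℂ) else 0) * (if t = a then 1 else 0))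
          * ((if s = b then 1 else 0) * (if y = b then 1 else 0))))) := by
    intro a b; simp only [siteK, Matrix.of_apply]; ring
  have S1 := hfac (fun b => (if x = b then (1:ℂ) else 0) * (if y = b then 1 else 0))
    (fun a => (if s = a then (1:ℂ) else 0) * (if t = a then 1 else 0))
  have S2 := hfac (fun b => (if x = b then (1:ℂ) else 0) * (if t = b then 1 else 0))
    (fun a => (if s = a then (1:ℂ) else 0) * (if y = a then 1 else 0))
  have S4 := hfac' (fun a => (if x = a then (1:ℂ) else 0) * (if y = a then 1 else 0))
    (fun b => (if s = b then (1:ℂ) else 0) * (if t = b then 1 else 0))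
  have S3 := hfac' (fun a => (if x = a then (1:ℂ) else 0) * (if t = a then 1 else 0))
    (fun b => (if s = b then (1:ℂ) else 0) * (if y = b then 1 else 0))
  calc ∑ p : Fin m × Fin m, siteK p x s * siteK p y t
      = ∑ a : Fin m, ∑ b : Fin m, siteK (a, b) x s * siteK (a, b) y t := by
        rw [Fintype.sum_prod_type]
    _ = ∑ a : Fin m, ∑ b : Fin m,
        (((((if x = b then (1:ℂ) else 0) * (if y = b then 1 else 0))
          * ((if s = a then 1 else 0) * (if t = a then 1 else 0)))
        - (((if x = b then (1:ℂ) else 0) * (if t = b then 1 else 0))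
          * ((if s = a then 1 else 0) * (if y = a then 1 else 0))))
        + (((((if x = a then (1:ℂ) else 0) * (if y = a then 1 else 0))
          * ((if s = b then 1 else 0) * (if t = b then 1 else 0))))
        - ((((if x = a then (1:ℂ) else 0) * (if t = a then 1 else 0))
          * ((if s = b then 1 else 0) * (if y = b then 1 else 0)))))) :=
        Finset.sum_congr rfl fun a _ => Finset.sum_congr rfl fun b _ => expand a b
    _ = 2 * ((if x = y then (1:ℂ) else 0) * (if s = t then 1 else 0)
        - (if x = t then 1 else 0) * (if s = y then 1 else 0)) := by
        simp only [Finset.sum_add_distrib, Finset.sum_sub_distrib]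
        rw [S1, S2, S3, S4, delta_sum x y, delta_sum s t, delta_sum x t, delta_sum s y]
        ring

/-- The tensor-product Kraus operators. -/
noncomputable def kraus {n : ℕ} {d : Fin n → ℕ} (α : ∀ i, Fin (d i) × Fin (d i)) :
    Matrix (∀ i, Fin (d i)) (∀ i, Fin (d i)) ℂ :=
  Matrix.of fun x s => ∏ i, siteK (α i) (x i) (s i)

/-- Collapse of the per-subset delta sums to `subsystemPad`. -/
lemma collapse {n : ℕ} {d : Fin n → ℕ}
    (ρ : Matrix (∀ i, Fin (d i)) (∀ i, Fin (d i)) ℂ) (B : Finset (Fin n))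
    (x y : ∀ i, Fin (d i)) :
    (∑ t : ∀ i, Fin (d i), ∑ s : ∀ i, Fin (d i), ρ t s *
      ((∏ i ∈ B, ((if x i = t i then (1:ℂ) else 0) * (if s i = y i then 1 else 0)))
        * ∏ i ∈ Bᶜ, ((if x i = y i then (1:ℂ) else 0) * (if s i = t i then 1 else 0))))
      = subsystemPad ρ B x y := by
  classical
  have hsplit : ∀ s t : ∀ i, Fin (d i),
      ((∏ i ∈ B, ((if x i = t i then (1:ℂ) else 0) * (if s i = y i then 1 else 0)))
        * ∏ i ∈ Bᶜ, ((if x i = y i then (1:ℂ) else 0) * (if s i = t i then 1 else 0)))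
      = ((if ∀ i ∈ B, x i = t i then (1:ℂ) else 0) * (if ∀ i ∈ B, s i = y i then 1 else 0))
        * ((if ∀ i ∈ Bᶜ, x i = y i then (1:ℂ) else 0)
          * (if ∀ i ∈ Bᶜ, s i = t i then 1 else 0)) := by
    intro s t
    rw [Finset.prod_mul_distrib, Finset.prod_mul_distrib,
      Finset.prod_boole, Finset.prod_boole, Finset.prod_boole, Finset.prod_boole]
    congr!
  simp only [hsplit]
  by_cases h : ∀ i ∉ B, x i = y i
  · have h' : ∀ i ∈ Bᶜ, x i = y i := fun i hi => h i (Finset.mem_compl.mp hi)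
    simp only [if_pos h', one_mul]
    have hT : ∀ s t : ∀ i, Fin (d i),
        (if ∀ i ∈ B, x i = t i then (1:ℂ) else 0) * (if ∀ i ∈ Bᶜ, s i = t i then 1 else 0)
        = if t = (fun i => if i ∈ B then x i else s i) then (1:ℂ) else 0 := by
      intro s t
      have hiff : ((∀ i ∈ B, x i = t i) ∧ (∀ i ∈ Bᶜ, s i = t i))
          ↔ t = (fun i => if i ∈ B then x i else s i) := by
        constructor
        · rintro ⟨h1, h2⟩
          funext i
          by_cases hi : i ∈ B
          · simp [hi, (h1 i hi).symm]
          · simp [hi, (h2 i (Finset.mem_compl.mpr hi)).symm]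
        · intro ht
          subst ht
          refine ⟨fun i hi => by simp [hi], fun i hi => by simp [Finset.mem_compl.mp hi]⟩
      rw [boole_mul, ← ite_and]
      exact if_congr hiff rfl rfl
    have hre : ∀ s t : ∀ i, Fin (d i),
        ρ t s * (((if ∀ i ∈ B, x i = t i then (1:ℂ) else 0)
            * (if ∀ i ∈ B, s i = y i then 1 else 0))
          * (if ∀ i ∈ Bᶜ, s i = t i then 1 else 0))
        = if t = (fun i => if i ∈ B then x i else s i) then
            ρ t s * (if ∀ i ∈ B, s i = y i then (1:ℂ) else 0) else 0 := by
      intro s t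
      rw [show (((if ∀ i ∈ B, x i = t i then (1:ℂ) else 0)
            * (if ∀ i ∈ B, s i = y i then 1 else 0))
          * (if ∀ i ∈ Bᶜ, s i = t i then 1 else 0))
        = ((if ∀ i ∈ B, x i = t i then (1:ℂ) else 0)
            * (if ∀ i ∈ Bᶜ, s i = t i then 1 else 0))
          * (if ∀ i ∈ B, s i = y i then 1 else 0) from by ring]
      rw [hT]
      by_cases ht : t = (fun i => if i ∈ B then x i else s i) <;> simp [ht]
    simp only [hre]
    rw [Finset.sum_comm]
    have hsumt : ∀ s : ∀ i, Fin (d i),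
        (∑ t : ∀ i, Fin (d i), if t = (fun i => if i ∈ B then x i else s i) then
            ρ t s * (if ∀ i ∈ B, s i = y i then (1:ℂ) else 0) else 0)
        = if ∀ i ∈ B, s i = y i then
            ρ (fun i => if i ∈ B then x i else s i) s else 0 := by
      intro s
      rw [Finset.sum_ite_eq' Finset.univ (fun i => if i ∈ B then x i else s i)
        (fun t => ρ t s * (if ∀ i ∈ B, s i = y i then (1:ℂ) else 0))]
      rw [if_pos (Finset.mem_univ _), mul_ite, mul_one, mul_zero]
    simp only [hsumt]
    rw [subsystemPad, Matrix.of_apply, if_pos h]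
    rw [← Finset.sum_filter, ← Finset.sum_filter]
    refine Finset.sum_nbij' (fun s => fun i => if i ∈ B then x i else s i)
      (fun w => fun i => if i ∈ B then y i else w i) ?_ ?_ ?_ ?_ ?_
    · intro s hs
      simp only [Finset.mem_filter, Finset.mem_univ, true_and]
      intro i hi; simp [hi]
    · intro w hw
      simp only [Finset.mem_filter, Finset.mem_univ, true_and]
      intro i hi; simp [hi]
    · intro s hs
      simp only [Finset.mem_filter, Finset.mem_univ, true_and] at hs
      funext i
      by_cases hi : i ∈ B
      · simp [hi, (hs i hi).symm]
      · simp [hi]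
    · intro w hw
      simp only [Finset.mem_filter, Finset.mem_univ, true_and] at hw
      funext i
      by_cases hi : i ∈ B
      · simp [hi, (hw i hi).symm]
      · simp [hi]
    · intro s hs
      simp only [Finset.mem_filter, Finset.mem_univ, true_and] at hs
      congr 1
      funext i
      by_cases hi : i ∈ B
      · simp [hi, (hs i hi)]
      · simp [hi]
  · have h' : ¬ ∀ i ∈ Bᶜ, x i = y i := by
      intro hc
      exact h fun i hi => hc i (Finset.mem_compl.mpr hi)
    rw [subsystemPad, Matrix.of_apply, if_neg h]
    simp [h, h']

set_option maxHeartbeats 1000000 in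
/-- Key identity: `2^n • Λ⁽ⁿ⁾(ρ) = Σ_α A_α ρᵀ A_αᴴ`. -/
lemma key_identity {n : ℕ} {d : Fin n → ℕ}
    (ρ : Matrix (∀ i, Fin (d i)) (∀ i, Fin (d i)) ℂ) :
    ((2:ℂ) ^ n) • genRed ρ
      = ∑ α : (∀ i, Fin (d i) × Fin (d i)), kraus α * ρ.transpose * (kraus α).conjTranspose := by
  classical
  ext x y
  have entry : ∀ α : (∀ i, Fin (d i) × Fin (d i)),
      (kraus α * ρ.transpose * (kraus α).conjTranspose) x y
      = ∑ t : ∀ i, Fin (d i), ∑ s : ∀ i, Fin (d i),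
          ρ t s * ∏ i, (siteK (α i) (x i) (s i) * siteK (α i) (y i) (t i)) := by
    intro α
    rw [Matrix.mul_apply]
    refine Finset.sum_congr rfl fun t _ => ?_
    rw [Matrix.mul_apply, Finset.sum_mul]
    refine Finset.sum_congr rfl fun s _ => ?_
    rw [Matrix.conjTranspose_apply, Matrix.transpose_apply]
    simp only [kraus, Matrix.of_apply, star_prod, siteK_star]
    rw [Finset.prod_mul_distrib]
    ring
  rw [Matrix.sum_apply]
  rw [Finset.sum_congr rfl fun α _ => entry α]
  rw [Finset.sum_comm]
  rw [Finset.sum_congr rfl (fun t _ => Finset.sum_comm)]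
  have inner : ∀ t s : ∀ i, Fin (d i),
      (∑ α : (∀ i, Fin (d i) × Fin (d i)),
        ρ t s * ∏ i, (siteK (α i) (x i) (s i) * siteK (α i) (y i) (t i)))
      = ρ t s * ((2:ℂ) ^ n *
          ∏ i, (-((if x i = t i then (1:ℂ) else 0) * (if s i = y i then 1 else 0))
            + (if x i = y i then 1 else 0) * (if s i = t i then 1 else 0))) := by
    intro t s
    rw [← Finset.mul_sum]
    congr 1
    rw [← Fintype.prod_sum (fun i p => siteK p (x i) (s i) * siteK p (y i) (t i))]
    rw [Finset.prod_congr rfl (fun i _ => site_sum (x i) (s i) (y i) (t i))]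
    rw [Finset.prod_mul_distrib, Finset.prod_const]
    simp only [Finset.card_univ, Fintype.card_fin]
    congr 1
    exact Finset.prod_congr rfl fun i _ => by ring
  rw [Finset.sum_congr rfl fun t _ => Finset.sum_congr rfl fun s _ => inner t s]
  have hneg : ∀ (B : Finset (Fin n)) (t s : ∀ i, Fin (d i)),
      (∏ i ∈ B, -((if x i = t i then (1:ℂ) else 0) * (if s i = y i then 1 else 0)))
      = ((-1:ℂ) ^ B.card) *
        ∏ i ∈ B, ((if x i = t i then (1:ℂ) else 0) * (if s i = y i then 1 else 0)) := by
    intro B t s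
    rw [Finset.prod_congr rfl fun i _ => (neg_one_mul _).symm, Finset.prod_mul_distrib,
      Finset.prod_const]
  have hprod : ∀ t s : ∀ i, Fin (d i),
      (∏ i, (-((if x i = t i then (1:ℂ) else 0) * (if s i = y i then 1 else 0))
          + (if x i = y i then 1 else 0) * (if s i = t i then 1 else 0)))
      = ∑ B : Finset (Fin n), ((-1:ℂ) ^ B.card) *
          ((∏ i ∈ B, ((if x i = t i then (1:ℂ) else 0) * (if s i = y i then 1 else 0)))
            * ∏ i ∈ Bᶜ, ((if x i = y i then (1:ℂ) else 0) * (if s i = t i then 1 else 0))) := by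
    intro t s
    rw [Fintype.prod_add]
    refine Finset.sum_congr rfl fun B _ => ?_
    rw [hneg B t s, mul_assoc]
  rw [Finset.sum_congr rfl fun t _ => Finset.sum_congr rfl fun s _ => by rw [hprod t s]]
  have final : (∑ t : ∀ i, Fin (d i), ∑ s : ∀ i, Fin (d i),
      ρ t s * ((2:ℂ) ^ n * ∑ B : Finset (Fin n), ((-1:ℂ) ^ B.card) *
        ((∏ i ∈ B, ((if x i = t i then (1:ℂ) else 0) * (if s i = y i then 1 else 0)))
          * ∏ i ∈ Bᶜ, ((if x i = y i then (1:ℂ) else 0) * (if s i = t i then 1 else 0)))))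
      = (2:ℂ) ^ n * ∑ B : Finset (Fin n), ((-1:ℂ) ^ B.card) *
          (∑ t : ∀ i, Fin (d i), ∑ s : ∀ i, Fin (d i), ρ t s *
            ((∏ i ∈ B, ((if x i = t i then (1:ℂ) else 0) * (if s i = y i then 1 else 0)))
              * ∏ i ∈ Bᶜ, ((if x i = y i then (1:ℂ) else 0) * (if s i = t i then 1 else 0)))) := by
    simp only [Finset.mul_sum]
    rw [Finset.sum_congr rfl fun t _ => Finset.sum_comm]
    rw [Finset.sum_comm]
    exact Finset.sum_congr rfl fun B _ => Finset.sum_congr rfl fun t _ =>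
      Finset.sum_congr rfl fun s _ => by ring
  rw [final]
  rw [Finset.sum_congr rfl fun B _ => by rw [collapse ρ B x y]]
  rw [Matrix.smul_apply, genRed, Matrix.sum_apply]
  simp only [Matrix.smul_apply, smul_eq_mul]

lemma posSemidef_smul_real {N : Type*} [Fintype N] {M : Matrix N N ℂ} (hM : M.PosSemidef)
    (c : ℝ) (hc : 0 ≤ c) : ((c : ℂ) • M).PosSemidef := by
  rw [Matrix.posSemidef_iff_dotProduct_mulVec]
  constructor
  · rw [Matrix.IsHermitian, Matrix.conjTranspose_smul, hM.1.eq]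
    congr 1
    simp [Complex.conj_ofReal]
  · intro v
    rw [Matrix.smul_mulVec, dotProduct_smul, smul_eq_mul]
    exact mul_nonneg (by rw [Complex.le_def]; simp [hc]) (hM.dotProduct_mulVec_nonneg v)

/-- The generalised reduction map is positive: if `ρ` is positive semidefinite on
`H_1 ⊗ ⋯ ⊗ H_n`, then `Λ⁽ⁿ⁾(ρ) = Σ_{B ⊆ {1,…,n}} (−1)^{|B|} ρ_B` is positive semidefinite. -/
theorem genRed_positive (n : ℕ) (d : Fin n → ℕ)
    (ρ : Matrix (∀ i, Fin (d i)) (∀ i, Fin (d i)) ℂ) (hρ : ρ.PosSemidef) :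
    (genRed ρ).PosSemidef := by
  classical
  have hsum : (((2:ℂ) ^ n) • genRed ρ).PosSemidef := by
    rw [key_identity]
    refine Finset.sum_induction _ Matrix.PosSemidef
      (fun a b ha hb => ha.add hb) Matrix.PosSemidef.zero ?_
    intro α _
    exact (hρ.transpose).mul_mul_conjTranspose_same (kraus α)
  have h2 : genRed ρ = ((((2:ℝ) ^ n)⁻¹ : ℝ) : ℂ) • (((2:ℂ) ^ n) • genRed ρ) := by
    rw [smul_smul]
    norm_num
  rw [h2]
  exact posSemidef_smul_real hsum _ (by positivity)
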